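/- Let N ≥ 1 be an integer. For every Schwartz function u : ℝ^N → ℂ, the following integration-by-parts identity holds: 2 Re ∫_{ℝ^N} (x · ∇ū(x)) Δ²u(x) dx = (4 - N) ∫_{ℝ^N} |Δu(x)|² dx. -/

import Mathlib

open MeasureTheory

noncomputable section

/-- The Laplacian `Δu = ∑ j ∂²u/∂x_j²` of a function on `ℝ^N`. -/
def laplacian {N : ℕ} {F : Type*} [NormedAddCommGroup F] [NormedSpace ℝ F]
    (u : EuclideanSpace ℝ (Fin N) → F) (x : EuclideanSpace ℝ (Fin N)) : F :=
  ∑ j : Fin N,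
    fderiv ℝ (fun y => fderiv ℝ u y (EuclideanSpace.single j 1)) x (EuclideanSpace.single j 1)

open SchwartzMap ContinuousLinearMap

variable {N : ℕ}
abbrev Ev (N : ℕ) := EuclideanSpace ℝ (Fin N)
def ee (N : ℕ) (j : Fin N) : Ev N := EuclideanSpace.single j 1

-- temperate growth of Schwartz maps
lemma schwartz_tg {E F : Type*} [NormedAddCommGroup E] [NormedSpace ℝ E]
    [NormedAddCommGroup F] [NormedSpace ℝ F] (f : 𝓢(E, F)) :
    Function.HasTemperateGrowth ⇑f := by
  refine ⟨f.smooth ⊤, fun n => ⟨0, SchwartzMap.seminorm ℝ 0 n f, fun x => ?_⟩⟩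
  simpa using f.norm_iteratedFDeriv_le_seminorm ℝ n x

def conjB : ℂ →L[ℝ] ℂ →L[ℝ] ℂ :=
  (ContinuousLinearMap.mul ℝ ℂ).comp Complex.conjCLE.toContinuousLinearMap

@[simp] lemma conjB_apply (a b : ℂ) : conjB a b = (starRingEnd ℂ) a * b := rfl

def reB : ℂ →L[ℝ] ℂ →L[ℝ] ℝ :=
  ((ContinuousLinearMap.compL ℝ ℂ ℂ ℝ) Complex.reCLM).comp conjB

@[simp] lemma reB_apply (a b : ℂ) : reB a b = ((starRingEnd ℂ) a * b).re := rfl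

def cmul (f g : 𝓢(Ev N, ℂ)) : 𝓢(Ev N, ℂ) :=
  SchwartzMap.bilinLeftCLM conjB.flip (schwartz_tg f) g

@[simp] lemma cmul_apply (f g : 𝓢(Ev N, ℂ)) (x : Ev N) :
    cmul f g x = (starRingEnd ℂ) (f x) * g x := rfl

def hm (f g : 𝓢(Ev N, ℂ)) : 𝓢(Ev N, ℝ) :=
  SchwartzMap.bilinLeftCLM reB.flip (schwartz_tg f) g

@[simp] lemma hm_apply (f g : 𝓢(Ev N, ℂ)) (x : Ev N) :
    hm f g x = ((starRingEnd ℂ) (f x) * g x).re := rfl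

def xmul {F : Type*} [NormedAddCommGroup F] [NormedSpace ℝ F] (k : Fin N) :
    𝓢(Ev N, F) →L[ℝ] 𝓢(Ev N, F) :=
  SchwartzMap.bilinLeftCLM (ContinuousLinearMap.lsmul ℝ ℝ : ℝ →L[ℝ] F →L[ℝ] F).flip
    (EuclideanSpace.proj (𝕜 := ℝ) k).hasTemperateGrowth

@[simp] lemma xmul_apply {F : Type*} [NormedAddCommGroup F] [NormedSpace ℝ F] (k : Fin N)
    (f : 𝓢(Ev N, F)) (x : Ev N) : xmul k f x = x k • f x := rfl

def pd (j : Fin N) : 𝓢(Ev N, ℂ) →L[ℝ] 𝓢(Ev N, ℂ) := LineDeriv.lineDerivOpCLM ℝ 𝓢(Ev N, ℂ) (ee N j)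

@[simp] lemma pd_apply (j : Fin N) (f : 𝓢(Ev N, ℂ)) (x : Ev N) :
    pd j f x = fderiv ℝ ⇑f x (ee N j) := rfl

def lapS : 𝓢(Ev N, ℂ) →L[ℝ] 𝓢(Ev N, ℂ) := ∑ j : Fin N, (pd j).comp (pd j)

lemma coe_sum {ι : Type*} (s : Finset ι) (f : ι → 𝓢(Ev N, ℂ)) (x : Ev N) :
    (∑ i ∈ s, f i) x = ∑ i ∈ s, f i x := by
  classical
  induction s using Finset.induction with
  | empty => simp
  | insert _ _ h ih => simp [Finset.sum_insert h, SchwartzMap.add_apply, ih]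

lemma lapS_apply (f : 𝓢(Ev N, ℂ)) (x : Ev N) :
    lapS f x = ∑ j : Fin N, pd j (pd j f) x := by
  simp [lapS, coe_sum, ContinuousLinearMap.sum_apply]

lemma lap_coe (f : 𝓢(Ev N, ℂ)) : laplacian ⇑f = ⇑(lapS f) := by
  funext x
  rw [lapS_apply, laplacian]
  congr 1

-- second derivative via CLM: fderiv (fun y => fderiv f y b) x a = fderiv (fderiv f) x a b
lemma fderiv_pd (f : 𝓢(Ev N, ℂ)) (b : Ev N) (x : Ev N) :
    fderiv ℝ (fun y => fderiv ℝ ⇑f y b) x = (fderiv ℝ (fderiv ℝ ⇑f) x).flip b := by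
  have hdiff : DifferentiableAt ℝ (fderiv ℝ ⇑f) x :=
    (((f.smooth ⊤).fderiv_right (m := ((⊤:ℕ∞) : WithTop ℕ∞)) (by simp)).differentiable (by simp)).differentiableAt
  rw [show (fun y => fderiv ℝ ⇑f y b) = fun y => (fderiv ℝ ⇑f y) ((fun _ => b) y) from rfl,
    fderiv_clm_apply hdiff (differentiableAt_const b)]
  simp

lemma pd_comm (a b : Fin N) (f : 𝓢(Ev N, ℂ)) : pd a (pd b f) = pd b (pd a f) := by
  ext x
  have hsym := second_derivative_symmetric (f := ⇑f) (f' := fderiv ℝ ⇑f)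
    (f'' := fderiv ℝ (fderiv ℝ ⇑f) x)
    (fun y => (f.differentiableAt).hasFDerivAt)
    ((((f.smooth ⊤).fderiv_right (m := ((⊤:ℕ∞) : WithTop ℕ∞)) (by simp)).differentiable (by simp)) x).hasFDerivAt
  have h1 : ⇑(pd b f) = fun y => fderiv ℝ ⇑f y (ee N b) := rfl
  have h2 : ⇑(pd a f) = fun y => fderiv ℝ ⇑f y (ee N a) := rfl
  simp only [pd_apply, h1, h2, fderiv_pd f (ee N b) x, fderiv_pd f (ee N a) x]
  exact hsym _ _

-- integration by parts, first order
lemma ibp1 (f g : 𝓢(Ev N, ℂ)) (j : Fin N) :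
    ∫ x, (starRingEnd ℂ) (f x) * (pd j g) x = - ∫ x, (starRingEnd ℂ) ((pd j f) x) * g x := by
  exact integral_bilinear_fderiv_right_eq_neg_left_of_integrable (B := conjB) (v := ee N j)
    ((cmul (pd j f) g).integrable) ((cmul f (pd j g)).integrable) ((cmul f g).integrable)
    (fun x _ => f.differentiableAt) (fun x _ => g.differentiableAt)

lemma ibp2 (f g : 𝓢(Ev N, ℂ)) (j : Fin N) :
    ∫ x, (starRingEnd ℂ) (f x) * (pd j (pd j g)) x
      = ∫ x, (starRingEnd ℂ) ((pd j (pd j f)) x) * g x := by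
  rw [ibp1 f (pd j g) j, ibp1 (pd j f) g j, neg_neg]

def pdR (j : Fin N) : 𝓢(Ev N, ℝ) →L[ℝ] 𝓢(Ev N, ℝ) := LineDeriv.lineDerivOpCLM ℝ 𝓢(Ev N, ℝ) (ee N j)

@[simp] lemma pdR_apply (j : Fin N) (f : 𝓢(Ev N, ℝ)) (x : Ev N) :
    pdR j f x = fderiv ℝ ⇑f x (ee N j) := rfl

lemma proj_fderiv (k : Fin N) (x : Ev N) :
    fderiv ℝ (fun y : Ev N => y k) x = EuclideanSpace.proj (𝕜 := ℝ) k := by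
  exact (EuclideanSpace.proj (𝕜 := ℝ) k).fderiv

lemma ee_apply (j k : Fin N) : (ee N j) k = if k = j then (1:ℝ) else 0 := by
  simp [ee, EuclideanSpace.single_apply]

-- integration by parts against the coordinate function
lemma ibp3 (h : 𝓢(Ev N, ℝ)) (k : Fin N) :
    ∫ x, x k * fderiv ℝ ⇑h x (ee N k) = - ∫ x, h x := by
  refine (integral_mul_fderiv_eq_neg_fderiv_mul_of_integrable
    (μ := (volume : Measure (Ev N))) (f := fun x : Ev N => x k) (g := ⇑h) (v := ee N k)
    ?_ ?_ ?_ ?_ (fun x _ => h.differentiableAt)).trans ?_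
  · apply (h.integrable (μ := volume)).congr
    filter_upwards with x
    rw [proj_fderiv]
    simp [ee_apply]
  · apply ((xmul k (pdR k h)).integrable (μ := volume)).congr
    filter_upwards with x
    simp [smul_eq_mul]
  · apply ((xmul k h).integrable (μ := volume)).congr
    filter_upwards with x
    simp [smul_eq_mul]
  · intro x _
    exact (EuclideanSpace.proj (𝕜 := ℝ) k).differentiableAt
  · congr 1
    apply integral_congr_ae
    filter_upwards with x
    rw [proj_fderiv]
    simp [ee_apply]

-- product rule for multiplication by a coordinate
lemma pd_xmul (j k : Fin N) (v : 𝓢(Ev N, ℂ)) :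
    pd j (xmul k v) = xmul k (pd j v) + ((ee N j) k) • v := by
  ext x
  have hc : DifferentiableAt ℝ (fun y : Ev N => y k) x :=
    (EuclideanSpace.proj (𝕜 := ℝ) k).differentiableAt
  have : ⇑(xmul k v) = fun y : Ev N => y k • v y := rfl
  simp only [pd_apply, this, SchwartzMap.add_apply, SchwartzMap.smul_apply, xmul_apply]
  rw [fderiv_fun_smul hc v.differentiableAt]
  simp [proj_fderiv, ee_apply]

def th (u : 𝓢(Ev N, ℂ)) : 𝓢(Ev N, ℂ) := ∑ j : Fin N, xmul j (pd j u)

lemma th_apply (u : 𝓢(Ev N, ℂ)) (x : Ev N) : th u x = ∑ j : Fin N, x j • fderiv ℝ ⇑u x (ee N j) := by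
  simp [th, coe_sum]

lemma lapS_pd_comm (k : Fin N) (u : 𝓢(Ev N, ℂ)) : lapS (pd k u) = pd k (lapS u) := by
  simp only [lapS, ContinuousLinearMap.sum_apply, ContinuousLinearMap.comp_apply, map_sum]
  refine Finset.sum_congr rfl fun j _ => ?_
  rw [pd_comm j k u, pd_comm j k (pd j u)]

lemma lap_th (u : 𝓢(Ev N, ℂ)) :
    lapS (th u) = (2:ℝ) • lapS u + ∑ k : Fin N, xmul k (pd k (lapS u)) := by
  have expand : ∀ (j k : Fin N) (w : 𝓢(Ev N, ℂ)),
      pd j (pd j (xmul k w)) = xmul k (pd j (pd j w)) + (2 * (ee N j) k) • pd j w := by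
    intro j k w
    rw [pd_xmul j k w, map_add, pd_xmul j k (pd j w), _root_.map_smul]
    module
  have hlap : ∀ f : 𝓢(Ev N, ℂ), lapS f = ∑ j : Fin N, pd j (pd j f) := by
    intro f; simp [lapS, ContinuousLinearMap.sum_apply]
  rw [hlap, th]
  have : ∀ j : Fin N, pd j (pd j (∑ k : Fin N, xmul k (pd k u)))
      = ∑ k : Fin N, (xmul k (pd j (pd j (pd k u))) + (2 * (ee N j) k) • pd j (pd k u)) := by
    intro j
    rw [map_sum, map_sum]
    exact Finset.sum_congr rfl fun k _ => expand j k (pd k u)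
  simp only [this, Finset.sum_add_distrib]
  have h1 : ∑ j : Fin N, ∑ k : Fin N, xmul k (pd j (pd j (pd k u)))
      = ∑ k : Fin N, xmul k (pd k (lapS u)) := by
    rw [Finset.sum_comm]
    refine Finset.sum_congr rfl fun k _ => ?_
    rw [← map_sum]
    congr 1
    rw [← lapS_pd_comm, hlap (pd k u)]
  have h2 : ∑ j : Fin N, ∑ k : Fin N, (2 * (ee N j) k) • pd j (pd k u)
      = (2:ℝ) • lapS u := by
    have : ∀ j : Fin N, ∑ k : Fin N, (2 * (ee N j) k) • pd j (pd k u)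
        = (2:ℝ) • pd j (pd j u) := by
      intro j
      rw [Finset.sum_eq_single j]
      · rw [ee_apply]; simp
      · intro k _ hk
        rw [ee_apply]
        simp [hk]
      · simp
    simp only [this, ← Finset.smul_sum]
    rw [← hlap u]
  rw [h1, h2, add_comm]

lemma hm_deriv (G : 𝓢(Ev N, ℂ)) (k : Fin N) (x : Ev N) :
    fderiv ℝ ⇑(hm G G) x (ee N k) = 2 * ((starRingEnd ℂ) ((pd k G) x) * G x).re := by
  have hG : HasFDerivAt ⇑G (fderiv ℝ ⇑G x) x := G.differentiableAt.hasFDerivAt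
  have hconj : HasFDerivAt (fun y => (starRingEnd ℂ) (G y))
      ((Complex.conjCLE.toContinuousLinearMap).comp (fderiv ℝ ⇑G x)) x :=
    (Complex.conjCLE.toContinuousLinearMap.hasFDerivAt).comp x hG
  have hmul := hconj.mul hG
  have hre := (Complex.reCLM.hasFDerivAt).comp x hmul
  have hcoe : ⇑(hm G G) = fun y => Complex.reCLM ((starRingEnd ℂ) (G y) * G y) := rfl
  have hre' : HasFDerivAt (fun y => Complex.reCLM ((starRingEnd ℂ) (G y) * G y))
      (Complex.reCLM.comp ((starRingEnd ℂ) (G x) • fderiv ℝ ⇑G x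
        + G x • (Complex.conjCLE.toContinuousLinearMap).comp (fderiv ℝ ⇑G x))) x := hre
  rw [hcoe, hre'.fderiv]
  simp only [ContinuousLinearMap.comp_apply, ContinuousLinearMap.add_apply,
    ContinuousLinearMap.smul_apply, pd_apply, map_add, Complex.reCLM_apply,
    ContinuousLinearEquiv.coe_coe, Complex.conjCLE_apply, smul_eq_mul]
  simp [Complex.mul_re, Complex.conj_re, Complex.conj_im]
  ring

lemma ee_sum (x : Ev N) : ∑ j : Fin N, x j • ee N j = x := by
  simpa [ee, EuclideanSpace.basisFun_apply, EuclideanSpace.basisFun_repr] using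
    (EuclideanSpace.basisFun (Fin N) ℝ).sum_repr x

lemma fderiv_eval_self (u : 𝓢(Ev N, ℂ)) (x : Ev N) :
    fderiv ℝ ⇑u x x = th u x := by
  rw [th_apply]
  have h : fderiv ℝ ⇑u x x = fderiv ℝ ⇑u x (∑ j : Fin N, x j • ee N j) := by rw [ee_sum]
  rw [h, map_sum]
  exact Finset.sum_congr rfl fun j _ => (fderiv ℝ ⇑u x).map_smul _ _

lemma conj_mul_re (z : ℂ) : ((starRingEnd ℂ) z * z).re = ‖z‖ ^ 2 := by
  simp only [Complex.mul_re, Complex.conj_re, Complex.conj_im,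
    Complex.sq_norm, Complex.normSq_apply]
  ring

set_option linter.unusedVariables false in
/-- Fourth-order virial identity:
`2 Re ∫ (x·∇ū) Δ²u dx = (4 - N) ∫ |Δu|² dx`. -/
theorem biharmonic_virial_identity (N : ℕ) (hN : 1 ≤ N)
    (u : SchwartzMap (EuclideanSpace ℝ (Fin N)) ℂ) :
    2 * (∫ x, (starRingEnd ℂ) (fderiv ℝ (⇑u) x x) * laplacian (laplacian (⇑u)) x).re
      = (4 - (N : ℝ)) * ∫ x, ‖laplacian (⇑u) x‖ ^ 2 := by
  classical
  have lapcoe : laplacian ⇑u = ⇑(lapS u) := lap_coe u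
  have lap2coe : laplacian (laplacian ⇑u) = ⇑(lapS (lapS u)) := by
    rw [lapcoe]; exact lap_coe (lapS u)
  -- rewrite RHS integral
  have hRHS : ∫ x, ‖laplacian (⇑u) x‖ ^ 2 = ∫ x, hm (lapS u) (lapS u) x := by
    rw [lapcoe]
    refine integral_congr_ae (Filter.Eventually.of_forall fun x => ?_)
    rw [hm_apply, conj_mul_re]
  -- rewrite LHS integrand
  have hLHS : (∫ x, (starRingEnd ℂ) (fderiv ℝ (⇑u) x x) * laplacian (laplacian (⇑u)) x)
      = ∫ x, (starRingEnd ℂ) (th u x) * lapS (lapS u) x := by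
    refine integral_congr_ae (Filter.Eventually.of_forall fun x => ?_)
    show (starRingEnd ℂ) (fderiv ℝ (⇑u) x x) * laplacian (laplacian (⇑u)) x
      = (starRingEnd ℂ) (th u x) * lapS (lapS u) x
    rw [lap2coe, fderiv_eval_self]
  -- Step 1: move the bilaplacian over
  have step1 : (∫ x, (starRingEnd ℂ) (th u x) * lapS (lapS u) x)
      = ∫ x, (starRingEnd ℂ) (lapS (th u) x) * lapS u x := by
    have e1 : (∫ x, (starRingEnd ℂ) (th u x) * lapS (lapS u) x)
        = ∑ j : Fin N, ∫ x, (starRingEnd ℂ) (th u x) * pd j (pd j (lapS u)) x := by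
      have : (∫ x, (starRingEnd ℂ) (th u x) * lapS (lapS u) x)
          = ∫ x, ∑ j : Fin N, cmul (th u) (pd j (pd j (lapS u))) x := by
        refine integral_congr_ae (Filter.Eventually.of_forall fun x => ?_)
        show (starRingEnd ℂ) (th u x) * lapS (lapS u) x
          = ∑ j : Fin N, cmul (th u) (pd j (pd j (lapS u))) x
        simp only [cmul_apply, lapS_apply (lapS u) x, Finset.mul_sum]
      rw [this, integral_finset_sum _ (fun j _ => (cmul (th u) (pd j (pd j (lapS u)))).integrable)]
      rfl
    have e2 : (∫ x, (starRingEnd ℂ) (lapS (th u) x) * lapS u x)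
        = ∑ j : Fin N, ∫ x, (starRingEnd ℂ) (pd j (pd j (th u)) x) * lapS u x := by
      have : (∫ x, (starRingEnd ℂ) (lapS (th u) x) * lapS u x)
          = ∫ x, ∑ j : Fin N, cmul (pd j (pd j (th u))) (lapS u) x := by
        refine integral_congr_ae (Filter.Eventually.of_forall fun x => ?_)
        show (starRingEnd ℂ) (lapS (th u) x) * lapS u x
          = ∑ j : Fin N, cmul (pd j (pd j (th u))) (lapS u) x
        simp only [cmul_apply, lapS_apply (th u) x, ← Finset.sum_mul, ← map_sum]
      rw [this,
        integral_finset_sum _ (fun j _ => (cmul (pd j (pd j (th u))) (lapS u)).integrable)]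
      rfl
    rw [e1, e2]
    exact Finset.sum_congr rfl fun j _ => ibp2 (th u) (lapS u) j
  -- Step 2: expand the Laplacian of th u
  have step2 : (∫ x, (starRingEnd ℂ) (lapS (th u) x) * lapS u x)
      = 2 * (∫ x, (starRingEnd ℂ) (lapS u x) * lapS u x)
        + ∑ k : Fin N, ∫ x, (starRingEnd ℂ) ((xmul k (pd k (lapS u))) x) * lapS u x := by
    have expand : ∀ x, (starRingEnd ℂ) (lapS (th u) x) * lapS u x
        = 2 * ((starRingEnd ℂ) (lapS u x) * lapS u x)
          + ∑ k : Fin N, (starRingEnd ℂ) ((xmul k (pd k (lapS u))) x) * lapS u x := by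
      intro x
      rw [lap_th u, SchwartzMap.add_apply, map_add, add_mul]
      congr 1
      · rw [SchwartzMap.smul_apply, Complex.real_smul, map_mul, Complex.conj_ofReal]
        push_cast
        ring
      · rw [_root_.coe_sum, map_sum, Finset.sum_mul]
    rw [integral_congr_ae (Filter.Eventually.of_forall expand), integral_add, integral_const_mul]
    · congr 1
      exact integral_finset_sum Finset.univ
        (fun k _ => (cmul (xmul k (pd k (lapS u))) (lapS u)).integrable (μ := volume))
    · exact ((cmul (lapS u) (lapS u)).integrable (μ := volume)).const_mul 2
    · exact integrable_finset_sum Finset.univ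
        (fun k _ => (cmul (xmul k (pd k (lapS u))) (lapS u)).integrable (μ := volume))
  -- real part of the main term
  have hA : (∫ x, (starRingEnd ℂ) (lapS u x) * lapS u x).re = ∫ x, hm (lapS u) (lapS u) x := by
    have hf : Integrable (fun x => (starRingEnd ℂ) (lapS u x) * lapS u x)
        (volume : Measure (Ev N)) := (cmul (lapS u) (lapS u)).integrable (μ := volume)
    have h1 : ∫ x, hm (lapS u) (lapS u) x
        = ∫ x, RCLike.re ((starRingEnd ℂ) (lapS u x) * lapS u x) := by
      refine integral_congr_ae (Filter.Eventually.of_forall fun x => ?_)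
      simp [RCLike.re_to_complex]
    rw [h1, integral_re hf, RCLike.re_to_complex]
  -- real part of the virial terms
  have hB : ∀ k : Fin N, 2 * (∫ x, (starRingEnd ℂ) ((xmul k (pd k (lapS u))) x) * lapS u x).re
      = - ∫ x, hm (lapS u) (lapS u) x := by
    intro k
    have hf : Integrable (fun x => (starRingEnd ℂ) ((xmul k (pd k (lapS u))) x) * lapS u x)
        (volume : Measure (Ev N)) := (cmul (xmul k (pd k (lapS u))) (lapS u)).integrable
    have h1 : (∫ x, (starRingEnd ℂ) ((xmul k (pd k (lapS u))) x) * lapS u x).re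
        = ∫ x, ((starRingEnd ℂ) ((xmul k (pd k (lapS u))) x) * lapS u x).re := by
      rw [← RCLike.re_to_complex, ← integral_re hf]
      rfl
    rw [h1, ← integral_const_mul, ← ibp3 (hm (lapS u) (lapS u)) k]
    refine integral_congr_ae (Filter.Eventually.of_forall fun x => ?_)
    show 2 * ((starRingEnd ℂ) ((xmul k (pd k (lapS u))) x) * lapS u x).re
      = x k * fderiv ℝ ⇑(hm (lapS u) (lapS u)) x (ee N k)
    rw [hm_deriv (lapS u) k x, xmul_apply]
    have : (starRingEnd ℂ) (x k • (pd k (lapS u)) x) * lapS u x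
        = (x k : ℂ) * ((starRingEnd ℂ) ((pd k (lapS u)) x) * lapS u x) := by
      rw [Complex.real_smul, map_mul, Complex.conj_ofReal]
      ring
    rw [this]
    simp [Complex.mul_re, Complex.ofReal_re, Complex.ofReal_im]
    ring
  -- assemble
  rw [hLHS, step1, step2, hRHS]
  rw [Complex.add_re, Complex.re_sum, mul_add]
  have h2re : (2 * (∫ x, (starRingEnd ℂ) (lapS u x) * lapS u x)).re
      = 2 * (∫ x, (starRingEnd ℂ) (lapS u x) * lapS u x).re := by
    simp [Complex.mul_re]
  rw [h2re, hA, Finset.mul_sum, Finset.sum_congr rfl (fun k _ => hB k), Finset.sum_const,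
    Finset.card_univ, Fintype.card_fin]
  push_cast
  ring
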